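/- For x > 0 and positive reals a₁, a₂, a₃, a₄ with a₁a₂a₃a₄ = p/16 (p ≥ 17), a₁ ≥ 1, a₂ ≥ 3/4, a₃ ≥ 9/16, and a_{i+1} ≥ (3/4)a_i, the lattice point count bound ∏_{i=1}^{4}(4√(x a_i / p) + 1) ≤ 64 x² p^{-3/2} + 75.52 x^{3/2} p^{-1} + 30.49 x p^{-1/2} + 8.11 x^{1/2} + 1 holds. -/

import Mathlib

set_option maxHeartbeats 2000000

/-- Lower-bound helper for square roots. -/
lemma my_sqrt_lb {a c : ℝ} (hc : 0 ≤ c) (h : c ^ 2 ≤ a) : c ≤ Real.sqrt a := by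
  nlinarith [Real.sq_sqrt (le_trans (sq_nonneg c) h), Real.sqrt_nonneg a, hc]

/-- Core polynomial inequality, with all square roots abstracted away. -/
lemma aux_lattice (t v r1 r2 r3 r4 : ℝ) (ht0 : 0 ≤ t) (hv : 1.2663 ≤ v)
    (hr1 : 1 ≤ r1) (hr2 : 0.86602 ≤ r2) (hr3 : 0.75 ≤ r3) (hr4 : 0.812049 ≤ r4)
    (hprodr : r1 * r2 * r3 * r4 = v ^ 6 / 4)
    (hp12 : r1 * r2 ≤ 0.666667 * v ^ 3)
    (hp13 : r1 * r3 ≤ 0.57736 * v ^ 3)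
    (hp23 : r2 * r3 ≤ 0.45825 * v ^ 4)
    (hp14 : r1 * r4 ≤ 0.384901 * v ^ 6)
    (hp24 : r2 * r4 ≤ 0.333334 * v ^ 6)
    (hp34 : r3 * r4 ≤ 0.288676 * v ^ 6)
    (hs4 : r4 ≤ 0.384901 * v ^ 6)
    (hs3 : r3 ≤ 1.15471 * r4) (hs2 : r2 ≤ 1.15471 * r3) (hs1 : r1 ≤ 1.15471 * r2) :
    (4 * (t * r1 / v ^ 6) + 1) * (4 * (t * r2 / v ^ 6) + 1) * (4 * (t * r3 / v ^ 6) + 1) *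
        (4 * (t * r4 / v ^ 6) + 1) ≤
      64 * (t ^ 2) ^ 2 * ((v ^ 6) ^ 3)⁻¹ + 75.52 * t ^ 3 * (v ^ 12)⁻¹ +
        30.49 * t ^ 2 * (v ^ 6)⁻¹ + 8.11 * t + 1 := by
  have hv0 : (0:ℝ) < v := by linarith
  have hV : (0:ℝ) < v ^ 6 := by positivity
  have hr10 : (0:ℝ) < r1 := by linarith
  have hr20 : (0:ℝ) < r2 := by linarith
  have hr30 : (0:ℝ) < r3 := by linarith
  have hr40 : (0:ℝ) < r4 := by linarith
  -- triple product bounds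
  have t1 : r2 * r3 * r4 ≤ 0.25 * v ^ 6 := by
    linarith [mul_nonneg (sub_nonneg.2 hr1) (by positivity : (0:ℝ) ≤ r2 * r3 * r4), hprodr]
  have t2 : r1 * r3 * r4 ≤ 0.288677 * v ^ 6 := by
    have h := mul_nonneg (sub_nonneg.2 hr2) (by positivity : (0:ℝ) ≤ r1 * r3 * r4)
    nlinarith [h, hprodr, mul_pos (mul_pos hr10 hr30) hr40, hV]
  have t3 : r1 * r2 * r4 ≤ 0.333334 * v ^ 6 := by
    have h := mul_nonneg (sub_nonneg.2 hr3) (by positivity : (0:ℝ) ≤ r1 * r2 * r4)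
    nlinarith [h, hprodr, mul_pos (mul_pos hr10 hr20) hr40, hV]
  have t4 : r1 * r2 * r3 ≤ 0.30787 * v ^ 6 := by
    have h := mul_nonneg (sub_nonneg.2 hr4) (by positivity : (0:ℝ) ≤ r1 * r2 * r3)
    nlinarith [h, hprodr, mul_pos (mul_pos hr10 hr20) hr30, hV]
  have P3 : r1 * r2 * r3 + r1 * r2 * r4 + r1 * r3 * r4 + r2 * r3 * r4 ≤ 1.18 * v ^ 6 := by
    linarith
  -- pair sum bound
  have hcube : 0.45825 * v + 1.244027 ≤ 0.898714 * v ^ 3 := by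
    nlinarith [mul_nonneg (sub_nonneg.2 hv) (sub_nonneg.2 hv), sq_nonneg (v - 1.2663), hv]
  have hquad : 0.45825 * v ^ 4 + 1.244027 * v ^ 3 ≤ 0.898714 * v ^ 6 := by
    linarith [mul_le_mul_of_nonneg_left hcube (by positivity : (0:ℝ) ≤ v ^ 3)]
  have P2 : r1 * r2 + r1 * r3 + r1 * r4 + r2 * r3 + r2 * r4 + r3 * r4 ≤ 1.905625 * v ^ 6 := by
    linarith
  -- singles bound
  have P1 : r1 + r2 + r3 + r4 ≤ 2.0275 * v ^ 6 := by linarith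
  -- main expansion
  have key : (4*t*r1 + v^6) * (4*t*r2 + v^6) * (4*t*r3 + v^6) * (4*t*r4 + v^6) ≤
      64*t^4*v^6 + 75.52*t^3*v^12 + 30.49*t^2*v^18 + 8.11*t*v^24 + v^24 := by
    have expand : (4*t*r1 + v^6) * (4*t*r2 + v^6) * (4*t*r3 + v^6) * (4*t*r4 + v^6) =
        64*t^4*v^6 + 64*t^3*v^6*(r1*r2*r3 + r1*r2*r4 + r1*r3*r4 + r2*r3*r4)
          + 16*t^2*v^12*(r1*r2 + r1*r3 + r1*r4 + r2*r3 + r2*r4 + r3*r4)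
          + 4*t*v^18*(r1+r2+r3+r4) + v^24 := by
      linear_combination (256*t^4) * hprodr
    rw [expand]
    have m3 := mul_le_mul_of_nonneg_left P3 (by positivity : (0:ℝ) ≤ 64*t^3*v^6)
    have m2 := mul_le_mul_of_nonneg_left P2 (by positivity : (0:ℝ) ≤ 16*t^2*v^12)
    have m1 := mul_le_mul_of_nonneg_left P1 (by positivity : (0:ℝ) ≤ 4*t*v^18)
    linarith [m1, m2, m3]
  have hne : (v:ℝ) ^ 6 ≠ 0 := ne_of_gt hV
  have eL : (4 * (t * r1 / v ^ 6) + 1) * (4 * (t * r2 / v ^ 6) + 1) *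
      (4 * (t * r3 / v ^ 6) + 1) * (4 * (t * r4 / v ^ 6) + 1)
      = ((4*t*r1 + v^6)*(4*t*r2 + v^6)*(4*t*r3 + v^6)*(4*t*r4 + v^6)) / (v^6)^4 := by
    field_simp
  have eR : 64 * (t ^ 2) ^ 2 * ((v ^ 6) ^ 3)⁻¹ + 75.52 * t ^ 3 * (v ^ 12)⁻¹ +
      30.49 * t ^ 2 * (v ^ 6)⁻¹ + 8.11 * t + 1
      = (64*t^4*v^6 + 75.52*t^3*v^12 + 30.49*t^2*v^18 + 8.11*t*v^24 + v^24) / (v^6)^4 := by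
    field_simp
  rw [eL, eR]
  exact (div_le_div_iff_of_pos_right (by positivity)).2 key

theorem lattice_point_count_bound (p x a₁ a₂ a₃ a₄ : ℝ) (hp : 17 ≤ p) (hx : 0 < x)
    (h1 : 1 ≤ a₁) (h2 : 3 / 4 ≤ a₂) (h3 : 9 / 16 ≤ a₃) (h4 : 0 < a₄)
    (hprod : a₁ * a₂ * a₃ * a₄ = p / 16)
    (h12 : (3 / 4) * a₁ ≤ a₂) (h23 : (3 / 4) * a₂ ≤ a₃) (h34 : (3 / 4) * a₃ ≤ a₄) :
    (4 * Real.sqrt (x * a₁ / p) + 1) * (4 * Real.sqrt (x * a₂ / p) + 1) *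
        (4 * Real.sqrt (x * a₃ / p) + 1) * (4 * Real.sqrt (x * a₄ / p) + 1) ≤
      64 * x ^ 2 * p ^ (-(3 : ℝ) / 2) + 75.52 * x ^ ((3 : ℝ) / 2) * p⁻¹ +
        30.49 * x * p ^ (-(1 : ℝ) / 2) + 8.11 * x ^ ((1 : ℝ) / 2) + 1 := by
  have hp0 : (0:ℝ) < p := by linarith
  have ha1 : (0:ℝ) < a₁ := by linarith
  have ha2 : (0:ℝ) < a₂ := by linarith
  have ha3 : (0:ℝ) < a₃ := by linarith
  -- twelfth root of p
  obtain ⟨v, hv0, hv12⟩ : ∃ v : ℝ, 0 < v ∧ v ^ 12 = p := by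
    refine ⟨p ^ ((1:ℝ)/12), Real.rpow_pos_of_pos hp0 _, ?_⟩
    rw [← Real.rpow_natCast (p ^ ((1:ℝ)/12)) 12, ← Real.rpow_mul hp0.le]
    norm_num
  have hv24 : v ^ 24 = p ^ 2 := by rw [← hv12]; ring
  have hsp : Real.sqrt p = v ^ 6 := by
    rw [← hv12, show v ^ 12 = (v ^ 6) ^ 2 by ring, Real.sqrt_sq (by positivity)]
  have hv17 : 1.2663 ≤ v := by
    by_contra hcon
    push_neg at hcon
    have h' : v ^ 12 < 1.2663 ^ 12 := pow_lt_pow_left₀ hcon hv0.le (by norm_num)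
    rw [hv12] at h'
    norm_num at h'
    linarith
  -- square root of x, made opaque
  obtain ⟨t, ht0, ht2⟩ : ∃ t : ℝ, 0 ≤ t ∧ t ^ 2 = x :=
    ⟨Real.sqrt x, Real.sqrt_nonneg x, Real.sq_sqrt hx.le⟩
  have hst : Real.sqrt x = t := by rw [← ht2, Real.sqrt_sq ht0]
  -- squares of the square roots
  have hR1 : (Real.sqrt a₁) ^ 2 = a₁ := Real.sq_sqrt ha1.le
  have hR2 : (Real.sqrt a₂) ^ 2 = a₂ := Real.sq_sqrt ha2.le
  have hR3 : (Real.sqrt a₃) ^ 2 = a₃ := Real.sq_sqrt ha3.le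
  have hR4 : (Real.sqrt a₄) ^ 2 = a₄ := Real.sq_sqrt h4.le
  -- chain inequalities at the a-level
  have d3 : a₃ ≤ (4/3) * a₄ := by linarith
  have d2 : a₂ ≤ (16/9) * a₄ := by linarith
  have d1 : a₁ ≤ (64/27) * a₄ := by linarith
  -- lower bound for a₄
  have hA4 : (12393 : ℝ)/65536 ≤ a₄ ^ 4 := by
    have e12 : a₁ * a₂ ≤ (1024/243) * a₄ ^ 2 := by
      linarith [mul_le_mul d1 d2 ha2.le (by positivity : (0:ℝ) ≤ (64/27)*a₄)]
    have e34 : a₃ * a₄ ≤ (4/3) * a₄ ^ 2 := by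
      linarith [mul_le_mul_of_nonneg_right d3 h4.le]
    have e : a₁ * a₂ * (a₃ * a₄) ≤ (1024/243) * a₄ ^ 2 * ((4/3) * a₄ ^ 2) :=
      mul_le_mul e12 e34 (by positivity) (by positivity)
    linarith [e, hprod, hp]
  have ha4lb : (0.659425 : ℝ) ≤ a₄ := by
    apply le_of_pow_le_pow_left₀ (by norm_num : (4:ℕ) ≠ 0) h4.le
    linarith [hA4]
  -- r-level lower bounds
  have hr1 : 1 ≤ Real.sqrt a₁ := my_sqrt_lb (by norm_num) (by nlinarith)
  have hr2 : (0.86602:ℝ) ≤ Real.sqrt a₂ := my_sqrt_lb (by norm_num) (by nlinarith)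
  have hr3 : (0.75:ℝ) ≤ Real.sqrt a₃ := my_sqrt_lb (by norm_num) (by nlinarith)
  have hr4 : (0.812049:ℝ) ≤ Real.sqrt a₄ := my_sqrt_lb (by norm_num) (by nlinarith)
  -- product of the square roots
  have hprodr : Real.sqrt a₁ * Real.sqrt a₂ * Real.sqrt a₃ * Real.sqrt a₄ = v ^ 6 / 4 := by
    rw [← Real.sqrt_mul ha1.le, ← Real.sqrt_mul (by positivity), ← Real.sqrt_mul (by positivity),
      hprod, show p / 16 = (v^6/4)^2 by rw [← hv12]; ring, Real.sqrt_sq (by positivity)]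
  -- pair bounds at a-level
  have g12 : (3:ℝ)/4 ≤ a₁ * a₂ := by
    linarith [mul_nonneg (sub_nonneg.2 h1) ha2.le]
  have g13 : (9:ℝ)/16 ≤ a₁ * a₃ := by
    linarith [mul_nonneg (sub_nonneg.2 h1) ha3.le]
  have g23 : (27:ℝ)/64 ≤ a₂ * a₃ := by
    linarith [mul_nonneg (sub_nonneg.2 h2) ha3.le, h3]
  have g123 : (27:ℝ)/64 ≤ a₁ * a₂ * a₃ := by
    linarith [mul_nonneg (sub_nonneg.2 h1) (by positivity : (0:ℝ) ≤ a₂ * a₃), g23]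
  have h34a : a₃ * a₄ ≤ p / 12 := by
    linarith [mul_nonneg (sub_nonneg.2 g12) (by positivity : (0:ℝ) ≤ a₃ * a₄), hprod]
  have h24a : a₂ * a₄ ≤ p / 9 := by
    linarith [mul_nonneg (sub_nonneg.2 g13) (by positivity : (0:ℝ) ≤ a₂ * a₄), hprod]
  have h14a : a₁ * a₄ ≤ (4/27) * p := by
    linarith [mul_nonneg (sub_nonneg.2 g23) (by positivity : (0:ℝ) ≤ a₁ * a₄), hprod]
  have h13a : (a₁ * a₃) ^ 2 ≤ p / 9 := by
    have h24low : (9/16) * (a₁ * a₃) ≤ a₂ * a₄ := by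
      linarith [mul_le_mul h12 h34 (by positivity : (0:ℝ) ≤ (3/4)*a₃) ha2.le]
    linarith [mul_le_mul_of_nonneg_left h24low (by positivity : (0:ℝ) ≤ a₁ * a₃), hprod]
  have h12a : (a₁ * a₂) ^ 2 ≤ (16/81) * p := by
    have ha3l : (9/16) * a₁ ≤ a₃ := by linarith
    have ha4l : (9/16) * a₂ ≤ a₄ := by linarith
    have h34low : (81/256) * (a₁ * a₂) ≤ a₃ * a₄ := by
      linarith [mul_le_mul ha3l ha4l (by positivity : (0:ℝ) ≤ (9/16)*a₂) ha3.le]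
    linarith [mul_le_mul_of_nonneg_left h34low (by positivity : (0:ℝ) ≤ a₁ * a₂), hprod]
  have h23a : (a₂ * a₃) ^ 3 ≤ p ^ 2 / 108 := by
    have k1 : a₂ ^ 2 * a₃ ≤ p / 9 := by
      have hk : (9/16) * a₂ ≤ a₁ * a₄ := by
        linarith [mul_nonneg (sub_nonneg.2 h1) h4.le]
      linarith [mul_le_mul_of_nonneg_left hk (by positivity : (0:ℝ) ≤ a₂ * a₃), hprod]
    have k2 : a₂ * a₃ ^ 2 ≤ p / 12 := by
      have hk : (3/4) * a₃ ≤ a₁ * a₄ := by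
        linarith [mul_nonneg (sub_nonneg.2 h1) h4.le]
      linarith [mul_le_mul_of_nonneg_left hk (by positivity : (0:ℝ) ≤ a₂ * a₃), hprod]
    linarith [mul_le_mul k1 k2 (by positivity : (0:ℝ) ≤ a₂ * a₃ ^ 2)
      (by positivity : (0:ℝ) ≤ p/9)]
  have a4u : a₄ ≤ (4/27) * p := by
    linarith [mul_nonneg (sub_nonneg.2 g123) h4.le, hprod]
  -- r-level pair bounds
  have hp12r : Real.sqrt a₁ * Real.sqrt a₂ ≤ 0.666667 * v ^ 3 := by
    apply le_of_pow_le_pow_left₀ (by norm_num : (4:ℕ) ≠ 0) (by positivity)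
    have h' : (Real.sqrt a₁ * Real.sqrt a₂) ^ 4 = (a₁ * a₂) ^ 2 := by
      rw [mul_pow, show (4:ℕ) = 2*2 from rfl, pow_mul, pow_mul, hR1, hR2]; ring
    rw [h']
    linarith [h12a, hv12, hp0.le]
  have hp13r : Real.sqrt a₁ * Real.sqrt a₃ ≤ 0.57736 * v ^ 3 := by
    apply le_of_pow_le_pow_left₀ (by norm_num : (4:ℕ) ≠ 0) (by positivity)
    have h' : (Real.sqrt a₁ * Real.sqrt a₃) ^ 4 = (a₁ * a₃) ^ 2 := by
      rw [mul_pow, show (4:ℕ) = 2*2 from rfl, pow_mul, pow_mul, hR1, hR3]; ring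
    rw [h']
    linarith [h13a, hv12, hp0.le]
  have hp23r : Real.sqrt a₂ * Real.sqrt a₃ ≤ 0.45825 * v ^ 4 := by
    apply le_of_pow_le_pow_left₀ (by norm_num : (6:ℕ) ≠ 0) (by positivity)
    have h' : (Real.sqrt a₂ * Real.sqrt a₃) ^ 6 = (a₂ * a₃) ^ 3 := by
      rw [mul_pow, show (6:ℕ) = 2*3 from rfl, pow_mul, pow_mul, hR2, hR3]; ring
    rw [h']
    linarith [h23a, hv24, sq_nonneg p]
  have hp14r : Real.sqrt a₁ * Real.sqrt a₄ ≤ 0.384901 * v ^ 6 := by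
    apply le_of_pow_le_pow_left₀ (by norm_num : (2:ℕ) ≠ 0) (by positivity)
    have h' : (Real.sqrt a₁ * Real.sqrt a₄) ^ 2 = a₁ * a₄ := by rw [mul_pow, hR1, hR4]
    rw [h']
    linarith [h14a, hv12, hp0.le]
  have hp24r : Real.sqrt a₂ * Real.sqrt a₄ ≤ 0.333334 * v ^ 6 := by
    apply le_of_pow_le_pow_left₀ (by norm_num : (2:ℕ) ≠ 0) (by positivity)
    have h' : (Real.sqrt a₂ * Real.sqrt a₄) ^ 2 = a₂ * a₄ := by rw [mul_pow, hR2, hR4]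
    rw [h']
    linarith [h24a, hv12, hp0.le]
  have hp34r : Real.sqrt a₃ * Real.sqrt a₄ ≤ 0.288676 * v ^ 6 := by
    apply le_of_pow_le_pow_left₀ (by norm_num : (2:ℕ) ≠ 0) (by positivity)
    have h' : (Real.sqrt a₃ * Real.sqrt a₄) ^ 2 = a₃ * a₄ := by rw [mul_pow, hR3, hR4]
    rw [h']
    linarith [h34a, hv12, hp0.le]
  -- singles
  have hs4r : Real.sqrt a₄ ≤ 0.384901 * v ^ 6 := by
    apply le_of_pow_le_pow_left₀ (by norm_num : (2:ℕ) ≠ 0) (by positivity)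
    rw [mul_pow, hR4]
    linarith [a4u, hv12, hp0.le]
  have hs3r : Real.sqrt a₃ ≤ 1.15471 * Real.sqrt a₄ := by
    apply le_of_pow_le_pow_left₀ (by norm_num : (2:ℕ) ≠ 0) (by positivity)
    rw [mul_pow, hR3, hR4]
    linarith [d3, h4]
  have hs2r : Real.sqrt a₂ ≤ 1.15471 * Real.sqrt a₃ := by
    apply le_of_pow_le_pow_left₀ (by norm_num : (2:ℕ) ≠ 0) (by positivity)
    rw [mul_pow, hR2, hR3]
    linarith [h23, ha3]
  have hs1r : Real.sqrt a₁ ≤ 1.15471 * Real.sqrt a₂ := by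
    apply le_of_pow_le_pow_left₀ (by norm_num : (2:ℕ) ≠ 0) (by positivity)
    rw [mul_pow, hR1, hR2]
    linarith [h12, ha2]
  -- rewrite the goal in terms of t, v and the square roots
  have e1 : Real.sqrt (x * a₁ / p) = t * Real.sqrt a₁ / v ^ 6 := by
    rw [Real.sqrt_div (by positivity) p, Real.sqrt_mul hx.le, hst, hsp]
  have e2 : Real.sqrt (x * a₂ / p) = t * Real.sqrt a₂ / v ^ 6 := by
    rw [Real.sqrt_div (by positivity) p, Real.sqrt_mul hx.le, hst, hsp]
  have e3 : Real.sqrt (x * a₃ / p) = t * Real.sqrt a₃ / v ^ 6 := by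
    rw [Real.sqrt_div (by positivity) p, Real.sqrt_mul hx.le, hst, hsp]
  have e4 : Real.sqrt (x * a₄ / p) = t * Real.sqrt a₄ / v ^ 6 := by
    rw [Real.sqrt_div (by positivity) p, Real.sqrt_mul hx.le, hst, hsp]
  have hx32e : x ^ ((3:ℝ)/2) = t ^ 3 := by
    rw [show ((3:ℝ)/2) = (1/2) * 3 by norm_num, Real.rpow_mul hx.le, ← Real.sqrt_eq_rpow, hst,
      show (3:ℝ) = ((3:ℕ):ℝ) by norm_num, Real.rpow_natCast]
  have hx12e : x ^ ((1:ℝ)/2) = t := by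
    rw [show ((1:ℝ)/2) = 1/(2:ℝ) by norm_num, ← Real.sqrt_eq_rpow, hst]
  have hp32e : p ^ (-(3:ℝ)/2) = ((v ^ 6) ^ 3)⁻¹ := by
    rw [show (-(3:ℝ)/2) = -((1/2) * 3) by norm_num, Real.rpow_neg hp0.le,
      Real.rpow_mul hp0.le, ← Real.sqrt_eq_rpow, hsp,
      show (3:ℝ) = ((3:ℕ):ℝ) by norm_num, Real.rpow_natCast]
  have hpn12e : p ^ (-(1:ℝ)/2) = (v ^ 6)⁻¹ := by
    rw [show (-(1:ℝ)/2) = -(1/(2:ℝ)) by norm_num, Real.rpow_neg hp0.le, ← Real.sqrt_eq_rpow, hsp]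
  rw [e1, e2, e3, e4, hp32e, hx32e, hpn12e, hx12e, ← ht2, ← hv12]
  exact aux_lattice t v (Real.sqrt a₁) (Real.sqrt a₂) (Real.sqrt a₃) (Real.sqrt a₄)
    ht0 hv17 hr1 hr2 hr3 hr4 hprodr hp12r hp13r hp23r hp14r hp24r hp34r hs4r hs3r hs2r hs1r
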